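/- arXiv:0908.0391 — 2 statements merged into one kernel-verified Lean document; each statement's English description precedes it below -/
import Mathlib

section
/- Fix integers k,N≥2 and a partition π={B_1,…,B_r} of {1,…,k} containing at least one block of cardinality ≥2. Then there exists a finite constant Θ(k,π)≥0 depending only on k and π (not on N) such that |C_π(2k,N)| ≤ Θ(k,π) · N^{k−1}. -/
open Finset

noncomputable section

/-- `a ∼_π b`: `a` and `b` lie in the same block of the partition `π`. -/
def pRel {k : ℕ} (π : Finpartition (univ : Finset (Fin k))) (a b : Fin k) : Prop :=
  ∃ B ∈ π.parts, a ∈ B ∧ b ∈ B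

/-- A chain, encoded by its upper and lower index vectors `(i, j)`, has
partition `π`: cyclically consecutive pairs coincide exactly within blocks,
both in the upper and in the lower sub-chain. -/
def ChainHasPartition {k N : ℕ} (π : Finpartition (univ : Finset (Fin k)))
    (c : (Fin k → Fin N) × (Fin k → Fin N)) : Prop :=
  (∀ a b : Fin k,
    ((c.1 a, c.1 (finRotate k a)) = (c.1 b, c.1 (finRotate k b)) ↔ pRel π a b)) ∧
  (∀ a b : Fin k,
    ((c.2 a, c.2 (finRotate k a)) = (c.2 b, c.2 (finRotate k b)) ↔ pRel π a b))

/-- The block `B` of the sub-chain `f` corresponds to the block `B'` of the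
sub-chain `g`. -/
def Corresponds {k N : ℕ} (f g : Fin k → Fin N) (B B' : Finset (Fin k)) : Prop :=
  ∀ a ∈ B, ∀ x ∈ B', (f a, f (finRotate k a)) = (g x, g (finRotate k x))

/-- The class `C_π(2k, N)` of chains with partition `π` such that: if all blocks
of `π` have cardinality `≥ 2`, some upper block corresponds to some lower block;
and every singleton block of the upper (resp. lower) sub-chain corresponds to a
block of the lower (resp. upper) sub-chain. -/
def chainClass (k N : ℕ) (π : Finpartition (univ : Finset (Fin k))) :
    Set ((Fin k → Fin N) × (Fin k → Fin N)) :=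
  {c | ChainHasPartition π c ∧
    ((∀ B ∈ π.parts, 2 ≤ B.card) →
      ∃ B ∈ π.parts, ∃ B' ∈ π.parts, Corresponds c.1 c.2 B B') ∧
    (∀ B ∈ π.parts, B.card = 1 →
      (∃ B' ∈ π.parts, Corresponds c.1 c.2 B B') ∧
      (∃ B' ∈ π.parts, Corresponds c.2 c.1 B B'))}

open Fin.CommRing Fin.NatCast in
/-- Key combinatorial lemma: any chain in the class uses at most `k - 1`
distinct indices in total. -/
lemma key_card_bound (k' N : ℕ) (hk : 1 ≤ k')
    (π : Finpartition (univ : Finset (Fin (k' + 1))))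
    (hπ : ∃ B ∈ π.parts, 2 ≤ B.card)
    (c : (Fin (k' + 1) → Fin N) × (Fin (k' + 1) → Fin N))
    (hc : c ∈ chainClass (k' + 1) N π) :
    ((univ.image c.1) ∪ (univ.image c.2)).card ≤ k' := by
  classical
  obtain ⟨⟨hEi, hEj⟩, hbig, hsingle⟩ := hc
  simp only [finRotate_succ_apply] at hEi hEj
  set Ei : Fin (k' + 1) → Fin N × Fin N := fun a => (c.1 a, c.1 (a + 1)) with hEidef
  set Ej : Fin (k' + 1) → Fin N × Fin N := fun a => (c.2 a, c.2 (a + 1)) with hEjdef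
  have hEi' : ∀ a b : Fin (k' + 1), Ei a = Ei b ↔ pRel π a b := hEi
  have hEj' : ∀ a b : Fin (k' + 1), Ej a = Ej b ↔ pRel π a b := hEj
  set Vi : Finset (Fin N) := univ.image c.1 with hVidef
  set Vj : Finset (Fin N) := univ.image c.2 with hVjdef
  set EIs : Finset (Fin N × Fin N) := univ.image Ei with hEIsdef
  set EJs : Finset (Fin N × Fin N) := univ.image Ej with hEJsdef
  -- a picking function for parts
  set pick : Finset (Fin (k' + 1)) → Fin (k' + 1) :=
    fun B => if h : B.Nonempty then B.min' h else 0 with hpickdef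
  have hpick : ∀ B ∈ π.parts, pick B ∈ B := by
    intro B hB
    have h := π.nonempty_of_mem_parts hB
    simp only [hpickdef, dif_pos h]
    exact B.min'_mem h
  -- Vi as images of edge endpoints
  have hVifst : Vi = EIs.image Prod.fst := by
    rw [hVidef, hEIsdef, Finset.image_image]; rfl
  have hVisnd : Vi = EIs.image Prod.snd := by
    rw [hVidef, hEIsdef, Finset.image_image]
    ext v
    simp only [Finset.mem_image, Finset.mem_univ, true_and, Function.comp]
    constructor
    · rintro ⟨a, rfl⟩
      exact ⟨a - 1, by show c.1 (a - 1 + 1) = c.1 a; rw [show a - 1 + 1 = a from by ring]⟩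
    · rintro ⟨a, rfl⟩
      exact ⟨a + 1, rfl⟩
  have hVjsnd : Vj = EJs.image Prod.snd := by
    rw [hVjdef, hEJsdef, Finset.image_image]
    ext v
    simp only [Finset.mem_image, Finset.mem_univ, true_and, Function.comp]
    constructor
    · rintro ⟨a, rfl⟩
      exact ⟨a - 1, by show c.2 (a - 1 + 1) = c.2 a; rw [show a - 1 + 1 = a from by ring]⟩
    · rintro ⟨a, rfl⟩
      exact ⟨a + 1, rfl⟩
  have hriVi : Vi.card ≤ EIs.card := by
    rw [hVisnd]; exact Finset.card_image_le
  -- each edge set has at most `parts.card` elements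
  have hEIr : EIs.card ≤ π.parts.card := by
    have hsub : EIs ⊆ π.parts.image (fun B => Ei (pick B)) := by
      intro e he
      simp only [hEIsdef, Finset.mem_image, Finset.mem_univ, true_and] at he
      obtain ⟨a, rfl⟩ := he
      obtain ⟨B, hB, haB⟩ := π.exists_mem (Finset.mem_univ a)
      exact Finset.mem_image.mpr ⟨B, hB, (hEi' _ _).mpr ⟨B, hB, hpick B hB, haB⟩⟩
    exact (Finset.card_le_card hsub).trans Finset.card_image_le
  have hEJr : EJs.card ≤ π.parts.card := by
    have hsub : EJs ⊆ π.parts.image (fun B => Ej (pick B)) := by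
      intro e he
      simp only [hEJsdef, Finset.mem_image, Finset.mem_univ, true_and] at he
      obtain ⟨a, rfl⟩ := he
      obtain ⟨B, hB, haB⟩ := π.exists_mem (Finset.mem_univ a)
      exact Finset.mem_image.mpr ⟨B, hB, (hEj' _ _).mpr ⟨B, hB, hpick B hB, haB⟩⟩
    exact (Finset.card_le_card hsub).trans Finset.card_image_le
  -- at least `(π.parts.filter (fun B => B.card = 1)).card` shared edges
  have hshared : (π.parts.filter (fun B => B.card = 1)).card ≤ (EJs ∩ EIs).card := by
    apply Finset.card_le_card_of_injOn (fun B => Ej (pick B))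
    · intro B hB
      simp only [Finset.mem_coe, Finset.mem_filter] at hB ⊢
      obtain ⟨hBp, hB1⟩ := hB
      obtain ⟨B', hB', hcorr⟩ := (hsingle B hBp hB1).2
      have hedge := hcorr (pick B) (hpick B hBp) (pick B') (hpick B' hB')
      simp only [finRotate_succ_apply] at hedge
      refine Finset.mem_inter.mpr ⟨Finset.mem_image_of_mem _ (Finset.mem_univ _), ?_⟩
      have : Ej (pick B) = Ei (pick B') := hedge
      rw [this]
      exact Finset.mem_image_of_mem _ (Finset.mem_univ _)
    · intro B1 hB1 B2 hB2 hfeq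
      simp only [Finset.mem_coe, Finset.mem_filter] at hB1 hB2
      obtain ⟨C, hC, hm1, hm2⟩ := (hEj' _ _).mp hfeq
      rw [π.eq_of_mem_parts hB1.1 hC (hpick _ hB1.1) hm1,
        π.eq_of_mem_parts hB2.1 hC (hpick _ hB2.1) hm2]
  -- new lower vertices need new lower edges
  have hVjdiff : (Vj \ Vi).card ≤ (EJs \ EIs).card := by
    have hdiffsub : Vj \ Vi ⊆ (EJs \ EIs).image Prod.snd := by
      intro v hv
      obtain ⟨hvj, hvi⟩ := Finset.mem_sdiff.mp hv
      rw [hVjsnd] at hvj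
      obtain ⟨e, he, rfl⟩ := Finset.mem_image.mp hvj
      refine Finset.mem_image.mpr ⟨e, Finset.mem_sdiff.mpr ⟨he, fun heI => ?_⟩, rfl⟩
      exact hvi (by rw [hVisnd]; exact Finset.mem_image_of_mem _ heI)
    exact (Finset.card_le_card hdiffsub).trans Finset.card_image_le
  have hI : (EJs \ EIs).card + (EJs ∩ EIs).card = EJs.card :=
    Finset.card_sdiff_add_card_inter EJs EIs
  -- 2 * parts.card ≤ (k'+1) + (π.parts.filter (fun B => B.card = 1)).card
  have hsum : ∑ B ∈ π.parts, B.card = k' + 1 := by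
    rw [π.sum_card_parts]; simp
  have hcount : 2 * π.parts.card ≤ (k' + 1) + (π.parts.filter (fun B => B.card = 1)).card := by
    have h1 : ∑ B ∈ π.parts.filter (fun B => B.card = 1), B.card = (π.parts.filter (fun B => B.card = 1)).card := by
      rw [Finset.sum_congr rfl (fun B hB => (Finset.mem_filter.mp hB).2)]
      simp
    have h2 : (π.parts.filter (fun B => ¬ B.card = 1)).card * 2 ≤
        ∑ B ∈ π.parts.filter (fun B => ¬ B.card = 1), B.card := by
      have := Finset.card_nsmul_le_sum (π.parts.filter (fun B => ¬ B.card = 1))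
        (fun B => B.card) 2 (by
          intro B hB
          obtain ⟨hBp, hB1⟩ := Finset.mem_filter.mp hB
          have := Finset.card_pos.mpr (π.nonempty_of_mem_parts hBp)
          show 2 ≤ B.card
          omega)
      simpa [smul_eq_mul] using this
    have h3 : (π.parts.filter (fun B => B.card = 1)).card +
        (π.parts.filter (fun B => ¬ B.card = 1)).card = π.parts.card :=
      Finset.card_filter_add_card_filter_not _
    have h4 : ∑ B ∈ π.parts.filter (fun B => B.card = 1), B.card +
        ∑ B ∈ π.parts.filter (fun B => ¬ B.card = 1), B.card = ∑ B ∈ π.parts, B.card :=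
      Finset.sum_filter_add_sum_filter_not _ _ _
    omega
  -- the hard case: mixed partition forces a strict vertex deficiency
  have hmixed : (π.parts.filter (fun B => B.card = 1)).Nonempty → Vi.card < EIs.card := by
    rintro ⟨B0, hB0⟩
    rcases lt_or_eq_of_le hriVi with h | h
    · exact h
    exfalso
    have hinj : Set.InjOn Prod.fst (EIs : Set (Fin N × Fin N)) := by
      apply Finset.injOn_of_card_image_eq
      rw [← hVifst]; exact h
    rw [Finset.mem_filter] at hB0
    obtain ⟨hB0p, hB0c⟩ := hB0
    obtain ⟨a0, hB0eq⟩ := Finset.card_eq_one.mp hB0c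
    have ha0B0 : a0 ∈ B0 := by rw [hB0eq]; exact Finset.mem_singleton_self a0
    obtain ⟨B2, hB2, h2card⟩ := hπ
    obtain ⟨b, hbmem, b', hb'mem, hne⟩ := Finset.one_lt_card.mp (by omega : 1 < B2.card)
    set m : Fin (k' + 1) := b' - b with hmdef
    have hm : m ≠ 0 := sub_ne_zero.mpr hne.symm
    have hbase : Ei (b + m) = Ei b := by
      rw [show b + m = b' from by rw [hmdef]; ring]
      exact (hEi' _ _).mpr ⟨B2, hB2, hb'mem, hbmem⟩
    have hstep : ∀ x : Fin (k' + 1), Ei (x + m) = Ei x → Ei (x + 1 + m) = Ei (x + 1) := by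
      intro x hx
      have h2 : c.1 (x + m + 1) = c.1 (x + 1) := congrArg Prod.snd hx
      apply hinj (Finset.mem_coe.mpr (Finset.mem_image_of_mem Ei (Finset.mem_univ _)))
        (Finset.mem_coe.mpr (Finset.mem_image_of_mem Ei (Finset.mem_univ _)))
      show c.1 (x + 1 + m) = c.1 (x + 1)
      rw [show x + 1 + m = x + m + 1 from by ring]
      exact h2
    have hall : ∀ n : ℕ, Ei (b + n + m) = Ei (b + n) := by
      intro n
      induction n with
      | zero => simpa using hbase
      | succ n ih =>
        have hstep' := hstep (b + n) ih
        rw [show ((n + 1 : ℕ) : Fin (k' + 1)) = (n : Fin (k' + 1)) + 1 from by push_cast; ring,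
          show b + ((n : Fin (k' + 1)) + 1) = b + n + 1 from by ring]
        exact hstep'
    have hallx : ∀ x : Fin (k' + 1), Ei (x + m) = Ei x := by
      intro x
      have hx := hall (x - b).val
      rwa [Fin.cast_val_eq_self, show b + (x - b) = x from by ring] at hx
    obtain ⟨C, hC, hmem1, hmem2⟩ := (hEi' _ _).mp (hallx a0)
    have hCB0 : C = B0 := π.eq_of_mem_parts hC hB0p hmem2 ha0B0
    have : a0 + m = a0 := by
      have := hCB0 ▸ hmem1
      rw [hB0eq] at this
      exact Finset.mem_singleton.mp this
    exact hm (by rw [show m = (a0 + m) - a0 from by ring, this, sub_self])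
  -- union bound
  have hunion : (Vi ∪ Vj).card ≤ Vi.card + (Vj \ Vi).card := by
    rw [← Finset.union_sdiff_self_eq_union]
    exact Finset.card_union_le _ _
  show (Vi ∪ Vj).card ≤ k'
  by_cases hs : (π.parts.filter (fun B => B.card = 1)).Nonempty
  · have h1 : Vi.card < EIs.card := hmixed hs
    have hs1 : 1 ≤ (π.parts.filter (fun B => B.card = 1)).card := Finset.card_pos.mpr hs
    omega
  · have hs0 : (π.parts.filter (fun B => B.card = 1)).card = 0 := by
      rw [Finset.card_eq_zero, ← Finset.not_nonempty_iff_eq_empty]; exact hs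
    have hall2 : ∀ B ∈ π.parts, 2 ≤ B.card := by
      intro B hB
      have hne : B.Nonempty := π.nonempty_of_mem_parts hB
      have h1 : B.card ≠ 1 := fun h1 =>
        hs ⟨B, Finset.mem_filter.mpr ⟨hB, h1⟩⟩
      have := Finset.card_pos.mpr hne
      omega
    obtain ⟨B, hB, B', hB', hcorr⟩ := hbig hall2
    have hint : 1 ≤ (EJs ∩ EIs).card := by
      apply Finset.card_pos.mpr
      refine ⟨Ej (pick B'), Finset.mem_inter.mpr
        ⟨Finset.mem_image_of_mem _ (Finset.mem_univ _), ?_⟩⟩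
      have hedge := hcorr (pick B) (hpick B hB) (pick B') (hpick B' hB')
      simp only [finRotate_succ_apply] at hedge
      have : Ei (pick B) = Ej (pick B') := hedge
      rw [← this]
      exact Finset.mem_image_of_mem _ (Finset.mem_univ _)
    omega

/-- Factorization lemma: a pair of functions with small joint image factors
through `Fin m`. -/
lemma factor_lemma {k N m : ℕ} (hm : 1 ≤ m) (hN : 1 ≤ N)
    (c : (Fin k → Fin N) × (Fin k → Fin N))
    (h : ((univ.image c.1) ∪ (univ.image c.2)).card ≤ m) :
    ∃ p q : Fin k → Fin m, ∃ g : Fin m → Fin N, c = (g ∘ p, g ∘ q) := by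
  classical
  set S : Finset (Fin N) := (univ.image c.1) ∪ (univ.image c.2) with hS
  let e := S.equivFin
  let g : Fin m → Fin N := fun t =>
    if h' : (t : ℕ) < S.card then (e.symm ⟨t, h'⟩ : Fin N) else ⟨0, hN⟩
  have hmem1 : ∀ a, c.1 a ∈ S := fun a =>
    Finset.mem_union_left _ (Finset.mem_image_of_mem _ (Finset.mem_univ a))
  have hmem2 : ∀ a, c.2 a ∈ S := fun a =>
    Finset.mem_union_right _ (Finset.mem_image_of_mem _ (Finset.mem_univ a))
  refine ⟨fun a => Fin.castLE h (e ⟨c.1 a, hmem1 a⟩),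
    fun a => Fin.castLE h (e ⟨c.2 a, hmem2 a⟩), g, ?_⟩
  have key : ∀ (v : Fin N) (hv : v ∈ S), g (Fin.castLE h (e ⟨v, hv⟩)) = v := by
    intro v hv
    have hlt : ((Fin.castLE h (e ⟨v, hv⟩)) : ℕ) < S.card := (e ⟨v, hv⟩).isLt
    simp only [g, dif_pos hlt]
    have heq : (⟨((Fin.castLE h (e ⟨v, hv⟩)) : ℕ), hlt⟩ : Fin S.card) = e ⟨v, hv⟩ :=
      Fin.ext rfl
    rw [heq, Equiv.symm_apply_apply]
  rw [Prod.ext_iff]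
  constructor
  · funext a; exact (key _ (hmem1 a)).symm
  · funext a; exact (key _ (hmem2 a)).symm

/-- Proposition 4.4: if `π` has at least one block of cardinality `≥ 2`, then
`|C_π(2k, N)| ≤ Θ(k, π) · N^{k-1}` for a constant `Θ(k, π)` independent of `N`. -/
theorem chainClass_card_bound
    (k : ℕ) (hk : 2 ≤ k)
    (π : Finpartition (univ : Finset (Fin k)))
    (hπ : ∃ B ∈ π.parts, 2 ≤ B.card) :
    ∃ Θ : ℝ, 0 ≤ Θ ∧ ∀ N : ℕ, 2 ≤ N →
      ((chainClass k N π).ncard : ℝ) ≤ Θ * (N : ℝ) ^ (k - 1) := by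
  obtain ⟨k', rfl⟩ : ∃ k', k = k' + 1 := ⟨k - 1, by omega⟩
  have hk' : 1 ≤ k' := by omega
  refine ⟨((k' : ℝ) ^ (k' + 1)) * ((k' : ℝ) ^ (k' + 1)), by positivity, ?_⟩
  intro N hN
  set F : ((Fin (k' + 1) → Fin k') × (Fin (k' + 1) → Fin k') × (Fin k' → Fin N)) →
      ((Fin (k' + 1) → Fin N) × (Fin (k' + 1) → Fin N)) :=
    fun t => (t.2.2 ∘ t.1, t.2.2 ∘ t.2.1) with hF
  have hsub : chainClass (k' + 1) N π ⊆ Set.range F := by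
    intro c hc
    have hcard := key_card_bound k' N hk' π hπ c hc
    obtain ⟨p, q, g, hpq⟩ := factor_lemma hk' (by omega : 1 ≤ N) c hcard
    exact ⟨(p, q, g), hpq.symm⟩
  have h1 : (chainClass (k' + 1) N π).ncard ≤ (Set.range F).ncard :=
    Set.ncard_le_ncard hsub (Set.toFinite _)
  have h2 : (Set.range F).ncard ≤
      Fintype.card ((Fin (k' + 1) → Fin k') × (Fin (k' + 1) → Fin k') × (Fin k' → Fin N)) := by
    rw [← Set.image_univ]
    calc (F '' Set.univ).ncard ≤ (Set.univ :
        Set ((Fin (k' + 1) → Fin k') × (Fin (k' + 1) → Fin k') × (Fin k' → Fin N))).ncard :=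
          Set.ncard_image_le (Set.toFinite _)
      _ = _ := by rw [Set.ncard_univ, Nat.card_eq_fintype_card]
  have h3 : (chainClass (k' + 1) N π).ncard ≤ k' ^ (k' + 1) * (k' ^ (k' + 1) * N ^ k') := by
    refine (h1.trans h2).trans_eq ?_
    simp [Fintype.card_fun]
  have h4 : ((chainClass (k' + 1) N π).ncard : ℝ) ≤
      ((k' ^ (k' + 1) * (k' ^ (k' + 1) * N ^ k') : ℕ) : ℝ) := by exact_mod_cast h3
  calc ((chainClass (k' + 1) N π).ncard : ℝ) ≤
      ((k' ^ (k' + 1) * (k' ^ (k' + 1) * N ^ k') : ℕ) : ℝ) := h4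
    _ = ((k' : ℝ) ^ (k' + 1)) * ((k' : ℝ) ^ (k' + 1)) * (N : ℝ) ^ k' := by push_cast; ring
    _ = ((k' : ℝ) ^ (k' + 1)) * ((k' : ℝ) ^ (k' + 1)) * (N : ℝ) ^ (k' + 1 - 1) := by norm_num

end
end

section
/- Fix k≥2 and, for N≥2, let f_{k,N}:({1,…,N}^2)^k→R be the symmetric kernel f_{k,N} = (1/k!) Σ_{σ∈S_k} f_{k,N}^{(σ)}, where f_{k,N}^{(σ)}((a_1,b_1),…,(a_k,b_k)) = N^{−k/2} Σ_{i∈D_N^{(k)}} 1{i_{σ(1)}=a_1, i_{σ(1)+1}=b_1}⋯1{i_{σ(k)}=a_k, i_{σ(k)+1}=b_k}. Then for every r=1,…,k−1, ‖f_{k,N} ⋆_r f_{k,N}‖_{2k−2r} = O(N^{−1/2}) as N→∞; in fact ‖f_{k,N}^{(σ)} ⋆_r f_{k,N}^{(τ)}‖_{2k−2r}^2 ≤ N^{−1} for all σ,τ∈S_k. -/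
open MeasureTheory Filter Topology
open scoped Classical

noncomputable section

/-- `D_N^{(k)}`: the set of `i ∈ [N]^k` whose `k` cyclically consecutive pairs
`(i_a, i_{a+1})` are pairwise distinct. -/
def DN (N k : ℕ) : Finset (Fin k → Fin N) :=
  Finset.univ.filter fun i => ∀ a b : Fin k, a ≠ b →
    (i a, i (finRotate k a)) ≠ (i b, i (finRotate k b))

/-- Concatenation `(a₁,…,a_{k-r},x₁,…,x_r)`. -/
def splice {A : Type*} (k r : ℕ) (a : Fin (k - r) → A) (x : Fin r → A) : Fin k → A :=
  fun s => if h : (s : ℕ) < k - r then a ⟨s, h⟩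
    else x ⟨(s : ℕ) - (k - r), by have := s.isLt; omega⟩

/-- Squared norm `‖f ⋆_r g‖²_{2k-2r}` of the contraction of order `r`. -/
def contrNormSq {A : Type*} (k r : ℕ) (f g : (Fin k → A) → ℝ) : ℝ :=
  ∑ᶠ (a : Fin (k - r) → A) (b : Fin (k - r) → A),
    (∑ᶠ x : Fin r → A, f (splice k r a x) * g (splice k r b x)) ^ 2

/-- The kernel `f_{k,N}^{(σ)}((a₁,b₁),…,(a_k,b_k)) =
`N^{-k/2} Σ_{i ∈ D_N^{(k)}} Π_s 1{i_{σ(s)} = a_s, i_{σ(s)+1} = b_s}`. -/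
def kernelSigma (k N : ℕ) (σ : Equiv.Perm (Fin k)) (v : Fin k → ℕ × ℕ) : ℝ :=
  (N : ℝ) ^ (-(k : ℝ) / 2) *
    ∑ i ∈ DN N k, ∏ s : Fin k,
      (if v s = (((i (σ s) : ℕ)), ((i (finRotate k (σ s)) : ℕ))) then (1 : ℝ) else 0)

/-- The symmetrized kernel `f_{k,N} = (1/k!) Σ_{σ ∈ S_k} f_{k,N}^{(σ)}`. -/
def kernelF (k N : ℕ) (v : Fin k → ℕ × ℕ) : ℝ :=
  (1 / (Nat.factorial k) : ℝ) * ∑ σ : Equiv.Perm (Fin k), kernelSigma k N σ v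

/-! ### Auxiliary definitions -/

/-- The encoding of a tuple `i` under a permutation `σ`. -/
def encK (k N : ℕ) (σ : Equiv.Perm (Fin k)) (i : Fin k → Fin N) : Fin k → ℕ × ℕ :=
  fun s => (((i (σ s) : ℕ)), ((i (finRotate k (σ s)) : ℕ)))

/-- First `k - r` coordinates. -/
def headK (k r : ℕ) (w : Fin k → ℕ × ℕ) : Fin (k - r) → ℕ × ℕ :=
  fun t => w ⟨t, lt_of_lt_of_le t.isLt (Nat.sub_le k r)⟩

/-- Last `r` coordinates. -/
def tailK (k r : ℕ) (w : Fin k → ℕ × ℕ) : Fin r → ℕ × ℕ :=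
  fun u => if h : k - r + (u : ℕ) < k then w ⟨k - r + (u : ℕ), h⟩ else (0, 0)

/-- A generic "indicator sum" kernel. -/
def indSum {ι : Type*} (c : ℝ) (P : Finset ι) (w : ι → Fin k → ℕ × ℕ) :
    (Fin k → ℕ × ℕ) → ℝ :=
  fun v => c * ∑ p ∈ P, if v = w p then (1 : ℝ) else 0

lemma tailK_apply {k r : ℕ} (hr : r ≤ k) (w : Fin k → ℕ × ℕ) (u : Fin r) :
    tailK k r w u = w ⟨k - r + (u : ℕ), by have := u.isLt; omega⟩ := by
  unfold tailK
  rw [dif_pos]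

lemma splice_eq_iff {k r : ℕ} (hr : r ≤ k) (a : Fin (k - r) → ℕ × ℕ) (x : Fin r → ℕ × ℕ)
    (w : Fin k → ℕ × ℕ) :
    splice k r a x = w ↔ headK k r w = a ∧ tailK k r w = x := by
  constructor
  · rintro rfl
    constructor
    · funext t
      show splice k r a x ⟨(t : ℕ), _⟩ = a t
      unfold splice
      rw [dif_pos t.isLt]
    · funext u
      rw [tailK_apply hr]
      show splice k r a x ⟨k - r + (u : ℕ), _⟩ = x u
      unfold splice
      rw [dif_neg (show ¬(k - r + (u : ℕ) < k - r) by omega)]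
      congr 1
      apply Fin.ext
      show k - r + (u : ℕ) - (k - r) = (u : ℕ)
      omega
  · rintro ⟨hh, ht⟩
    funext s
    unfold splice
    split_ifs with h
    · rw [← hh]; rfl
    · rw [← ht, tailK_apply hr]
      congr 1
      apply Fin.ext
      simp only [Fin.val_mk]
      omega

lemma head_apply_eq {k r : ℕ} {w w' : Fin k → ℕ × ℕ} (h : headK k r w = headK k r w')
    {s : Fin k} (hs : (s : ℕ) < k - r) : w s = w' s :=
  congrFun h ⟨(s : ℕ), hs⟩

lemma tail_apply_eq {k r : ℕ} (hr : r ≤ k) {w w' : Fin k → ℕ × ℕ}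
    (h : tailK k r w = tailK k r w') {s : Fin k} (hs : k - r ≤ (s : ℕ)) : w s = w' s := by
  have hu : (s : ℕ) - (k - r) < r := by have := s.isLt; omega
  have h2 := congrFun h ⟨(s : ℕ) - (k - r), hu⟩
  rw [tailK_apply hr, tailK_apply hr] at h2
  convert h2 using 2 <;>
  · refine Fin.ext ?_
    simp only [Fin.val_mk]
    omega

lemma encK_fst {k N : ℕ} {σ τ : Equiv.Perm (Fin k)} {i j : Fin k → Fin N} {s s' : Fin k}
    (h : encK k N σ i s = encK k N τ j s') : i (σ s) = j (τ s') :=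
  Fin.val_injective (congrArg Prod.fst h)

lemma encK_snd {k N : ℕ} {σ τ : Equiv.Perm (Fin k)} {i j : Fin k → Fin N} {s s' : Fin k}
    (h : encK k N σ i s = encK k N τ j s') :
    i (finRotate k (σ s)) = j (finRotate k (τ s')) :=
  Fin.val_injective (congrArg Prod.snd h)

/-! ### The generic contraction-norm computation -/

lemma inner_finsum_eq {k r : ℕ} (hr : r ≤ k) {ι κ : Type*} (c d : ℝ)
    (P : Finset ι) (Q : Finset κ) (w : ι → Fin k → ℕ × ℕ) (u : κ → Fin k → ℕ × ℕ)
    (a b : Fin (k - r) → ℕ × ℕ) :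
    (∑ᶠ x : Fin r → ℕ × ℕ, indSum c P w (splice k r a x) * indSum d Q u (splice k r b x)) =
      c * d * ((P ×ˢ Q).filter fun pq =>
        headK k r (w pq.1) = a ∧ headK k r (u pq.2) = b ∧
        tailK k r (w pq.1) = tailK k r (u pq.2)).card := by
  classical
  have key : ∀ x : Fin r → ℕ × ℕ,
      indSum c P w (splice k r a x) * indSum d Q u (splice k r b x) =
      c * d * ∑ pq ∈ P ×ˢ Q,
        if (headK k r (w pq.1) = a ∧ headK k r (u pq.2) = b ∧
            tailK k r (w pq.1) = tailK k r (u pq.2)) ∧ x = tailK k r (w pq.1)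
        then (1 : ℝ) else 0 := by
    intro x
    unfold indSum
    rw [mul_mul_mul_comm, Finset.sum_mul_sum, ← Finset.sum_product']
    congr 1
    refine Finset.sum_congr rfl fun pq _ => ?_
    rw [ite_zero_mul_ite_zero, one_mul]
    refine if_congr ?_ rfl rfl
    constructor
    · rintro ⟨h1, h2⟩
      obtain ⟨ha, hxa⟩ := (splice_eq_iff hr a x _).mp h1
      obtain ⟨hb, hxb⟩ := (splice_eq_iff hr b x _).mp h2
      exact ⟨⟨ha, hb, hxa.trans hxb.symm⟩, hxa.symm⟩
    · rintro ⟨⟨ha, hb, hty⟩, hx⟩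
      refine ⟨(splice_eq_iff hr a x _).mpr ⟨ha, hx.symm⟩,
        (splice_eq_iff hr b x _).mpr ⟨hb, (hty.symm).trans hx.symm⟩⟩
  rw [finsum_congr key]
  set X := (P ×ˢ Q).image (fun pq => tailK k r (w pq.1)) with hX
  have hsupp : (Function.support fun x => c * d * ∑ pq ∈ P ×ˢ Q,
      if (headK k r (w pq.1) = a ∧ headK k r (u pq.2) = b ∧
          tailK k r (w pq.1) = tailK k r (u pq.2)) ∧ x = tailK k r (w pq.1)
      then (1 : ℝ) else 0) ⊆ ↑X := by
    intro x hx
    by_contra hnot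
    apply hx
    have hz : ∀ pq ∈ P ×ˢ Q,
        (if (headK k r (w pq.1) = a ∧ headK k r (u pq.2) = b ∧
            tailK k r (w pq.1) = tailK k r (u pq.2)) ∧ x = tailK k r (w pq.1)
        then (1 : ℝ) else 0) = 0 := by
      intro pq hpq
      refine if_neg fun hcon => hnot ?_
      exact Finset.mem_coe.mpr (Finset.mem_image.mpr ⟨pq, hpq, hcon.2.symm⟩)
    show (fun x => _) x = 0
    simp only
    rw [Finset.sum_eq_zero hz, mul_zero]
  rw [finsum_eq_sum_of_support_subset _ hsupp, ← Finset.mul_sum]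
  congr 1
  rw [Finset.sum_comm]
  rw [← Finset.sum_boole]
  refine Finset.sum_congr rfl fun pq hpq => ?_
  have hstep : ∀ x : Fin r → ℕ × ℕ,
      (if (headK k r (w pq.1) = a ∧ headK k r (u pq.2) = b ∧
          tailK k r (w pq.1) = tailK k r (u pq.2)) ∧ x = tailK k r (w pq.1)
      then (1 : ℝ) else 0) =
      if x = tailK k r (w pq.1)
      then (if headK k r (w pq.1) = a ∧ headK k r (u pq.2) = b ∧
          tailK k r (w pq.1) = tailK k r (u pq.2) then (1 : ℝ) else 0) else 0 := by
    intro x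
    by_cases h1 : x = tailK k r (w pq.1) <;>
      by_cases h2 : headK k r (w pq.1) = a ∧ headK k r (u pq.2) = b ∧
        tailK k r (w pq.1) = tailK k r (u pq.2) <;> simp [h1, h2]
  rw [Finset.sum_congr rfl fun x _ => hstep x, Finset.sum_ite_eq' X (tailK k r (w pq.1))]
  rw [if_pos (Finset.mem_image.mpr ⟨pq, hpq, rfl⟩)]

lemma contrNormSq_indSum {k r : ℕ} (hr : r ≤ k) {ι κ : Type*} (c d : ℝ)
    (P : Finset ι) (Q : Finset κ) (w : ι → Fin k → ℕ × ℕ) (u : κ → Fin k → ℕ × ℕ) :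
    contrNormSq k r (indSum c P w) (indSum d Q u) =
      (c * d) ^ 2 * ((((P ×ˢ Q) ×ˢ (P ×ˢ Q)).filter fun z =>
        headK k r (w z.1.1) = headK k r (w z.2.1) ∧
        headK k r (u z.1.2) = headK k r (u z.2.2) ∧
        tailK k r (w z.1.1) = tailK k r (u z.1.2) ∧
        tailK k r (w z.2.1) = tailK k r (u z.2.2)).card : ℕ) := by
  classical
  set M : (Fin (k - r) → ℕ × ℕ) → (Fin (k - r) → ℕ × ℕ) → ℕ := fun a b =>
    ((P ×ˢ Q).filter fun pq => headK k r (w pq.1) = a ∧ headK k r (u pq.2) = b ∧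
      tailK k r (w pq.1) = tailK k r (u pq.2)).card with hM
  have hinner : ∀ a b : Fin (k - r) → ℕ × ℕ,
      (∑ᶠ x : Fin r → ℕ × ℕ, indSum c P w (splice k r a x) * indSum d Q u (splice k r b x)) =
        c * d * (M a b : ℝ) := fun a b => inner_finsum_eq hr c d P Q w u a b
  unfold contrNormSq
  simp only [hinner]
  set A := P.image (fun p => headK k r (w p)) with hA
  set B := Q.image (fun q => headK k r (u q)) with hB
  have hMa : ∀ a b, a ∉ A → M a b = 0 := by
    intro a b ha
    rw [hM]
    simp only [Finset.card_eq_zero, Finset.filter_eq_empty_iff]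
    rintro pq hpq ⟨h1, h2, h3⟩
    exact ha (Finset.mem_image.mpr ⟨pq.1, (Finset.mem_product.mp hpq).1, h1⟩)
  have hMb : ∀ a b, b ∉ B → M a b = 0 := by
    intro a b hb
    rw [hM]
    simp only [Finset.card_eq_zero, Finset.filter_eq_empty_iff]
    rintro pq hpq ⟨h1, h2, h3⟩
    exact hb (Finset.mem_image.mpr ⟨pq.2, (Finset.mem_product.mp hpq).2, h2⟩)
  have h1 : ∀ a : Fin (k - r) → ℕ × ℕ,
      (∑ᶠ b : Fin (k - r) → ℕ × ℕ, (c * d * (M a b : ℝ)) ^ 2) =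
        ∑ b ∈ B, (c * d * (M a b : ℝ)) ^ 2 := by
    intro a
    refine finsum_eq_sum_of_support_subset _ ?_
    intro b hb
    by_contra hnot
    apply hb
    show (fun b => (c * d * (M a b : ℝ)) ^ 2) b = 0
    simp [hMb a b hnot]
  rw [finsum_congr h1]
  have h2 : (Function.support fun a => ∑ b ∈ B, (c * d * (M a b : ℝ)) ^ 2) ⊆ ↑A := by
    intro a ha
    by_contra hnot
    apply ha
    show (fun a => ∑ b ∈ B, (c * d * (M a b : ℝ)) ^ 2) a = 0
    simp only
    refine Finset.sum_eq_zero fun b _ => ?_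
    simp [hMa a b hnot]
  rw [finsum_eq_sum_of_support_subset _ h2]
  have hcard : ((((P ×ˢ Q) ×ˢ (P ×ˢ Q)).filter fun z =>
        headK k r (w z.1.1) = headK k r (w z.2.1) ∧
        headK k r (u z.1.2) = headK k r (u z.2.2) ∧
        tailK k r (w z.1.1) = tailK k r (u z.1.2) ∧
        tailK k r (w z.2.1) = tailK k r (u z.2.2)).card : ℕ) =
      ∑ a ∈ A, ∑ b ∈ B, (M a b) ^ 2 := by
    rw [Finset.card_eq_sum_card_fiberwise
      (f := fun z => (headK k r (w z.1.1), headK k r (u z.1.2))) (t := A ×ˢ B) ?_]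
    · rw [Finset.sum_product]
      refine Finset.sum_congr rfl fun a ha => Finset.sum_congr rfl fun b hb => ?_
      have hfib : ((((P ×ˢ Q) ×ˢ (P ×ˢ Q)).filter fun z =>
            headK k r (w z.1.1) = headK k r (w z.2.1) ∧
            headK k r (u z.1.2) = headK k r (u z.2.2) ∧
            tailK k r (w z.1.1) = tailK k r (u z.1.2) ∧
            tailK k r (w z.2.1) = tailK k r (u z.2.2)).filter fun z =>
              (headK k r (w z.1.1), headK k r (u z.1.2)) = (a, b)) =
          (((P ×ˢ Q).filter fun pq => headK k r (w pq.1) = a ∧ headK k r (u pq.2) = b ∧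
            tailK k r (w pq.1) = tailK k r (u pq.2)) ×ˢ
          ((P ×ˢ Q).filter fun pq => headK k r (w pq.1) = a ∧ headK k r (u pq.2) = b ∧
            tailK k r (w pq.1) = tailK k r (u pq.2))) := by
        ext z
        simp only [Finset.mem_filter, Finset.mem_product, Prod.mk.injEq]
        constructor
        · rintro ⟨⟨⟨⟨hP1, hQ1⟩, hP2, hQ2⟩, hh1, hh2, ht1, ht2⟩, hfa, hfb⟩
          exact ⟨⟨⟨hP1, hQ1⟩, hfa, hfb, ht1⟩, ⟨hP2, hQ2⟩, hh1 ▸ hfa, hh2 ▸ hfb, ht2⟩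
        · rintro ⟨⟨⟨hP1, hQ1⟩, hfa, hfb, ht1⟩, ⟨hP2, hQ2⟩, hfa', hfb', ht2⟩
          exact ⟨⟨⟨⟨hP1, hQ1⟩, hP2, hQ2⟩, hfa.trans hfa'.symm, hfb.trans hfb'.symm, ht1, ht2⟩,
            hfa, hfb⟩
      rw [hfib, Finset.card_product, sq]
    · intro z hz
      obtain ⟨hzmem, hpred⟩ := Finset.mem_filter.mp hz
      obtain ⟨hz1, hz2⟩ := Finset.mem_product.mp hzmem
      obtain ⟨hz11, hz12⟩ := Finset.mem_product.mp hz1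
      exact Finset.mem_product.mpr ⟨Finset.mem_image.mpr ⟨z.1.1, hz11, rfl⟩,
        Finset.mem_image.mpr ⟨z.1.2, hz12, rfl⟩⟩
  rw [hcard]
  push_cast
  rw [Finset.mul_sum]
  refine Finset.sum_congr rfl fun a _ => ?_
  rw [Finset.mul_sum]
  refine Finset.sum_congr rfl fun b _ => ?_
  ring

/-! ### Representations of the kernels -/

lemma kernelSigma_rep (k N : ℕ) (σ : Equiv.Perm (Fin k)) :
    kernelSigma k N σ = indSum ((N : ℝ) ^ (-(k : ℝ) / 2)) (DN N k) (encK k N σ) := by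
  funext v
  unfold kernelSigma indSum
  congr 1
  refine Finset.sum_congr rfl fun i _ => ?_
  by_cases h : v = encK k N σ i
  · rw [if_pos h]
    refine Finset.prod_eq_one fun s _ => ?_
    rw [if_pos]
    rw [h]; rfl
  · rw [if_neg h]
    obtain ⟨s, hs⟩ := Function.ne_iff.mp h
    refine Finset.prod_eq_zero (Finset.mem_univ s) ?_
    exact if_neg fun hcon => hs hcon

lemma kernelF_rep (k N : ℕ) :
    kernelF k N = indSum ((1 / (Nat.factorial k) : ℝ) * (N : ℝ) ^ (-(k : ℝ) / 2))
      ((DN N k) ×ˢ (Finset.univ : Finset (Equiv.Perm (Fin k))))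
      (fun p => encK k N p.2 p.1) := by
  funext v
  simp only [kernelF, kernelSigma_rep, indSum, Finset.sum_product, Finset.mul_sum]
  rw [Finset.sum_comm]
  simp [mul_assoc]

/-! ### The boundary index -/

open Fin.NatCast Fin.CommRing in
lemma boundary (k r : ℕ) (hk : 2 ≤ k) (hr1 : 1 ≤ r) (hrk : r ≤ k - 1)
    (τ : Equiv.Perm (Fin k)) :
    ∃ s₁ s₂ : Fin k, (s₁ : ℕ) < k - r ∧ k - r ≤ (s₂ : ℕ) ∧ finRotate k (τ s₁) = τ s₂ := by
  obtain ⟨m, rfl⟩ : ∃ m, k = m + 1 := ⟨k - 1, by omega⟩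
  classical
  set T : Finset (Fin (m + 1)) :=
    (Finset.univ.filter fun s : Fin (m + 1) => (s : ℕ) < m + 1 - r).image τ with hT
  have hmem : ∀ s : Fin (m + 1), (s : ℕ) < m + 1 - r → τ s ∈ T := fun s hs =>
    Finset.mem_image_of_mem τ (Finset.mem_filter.mpr ⟨Finset.mem_univ _, hs⟩)
  have h0T : τ ⟨0, by omega⟩ ∈ T := hmem _ (by show (0 : ℕ) < m + 1 - r; omega)
  have hlast : τ ⟨m, by omega⟩ ∉ T := by
    intro hcon
    obtain ⟨s, hsmem, hseq⟩ := Finset.mem_image.mp hcon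
    have hfil := (Finset.mem_filter.mp hsmem).2
    have hss : s = ⟨m, by omega⟩ := τ.injective hseq
    rw [hss] at hfil
    simp only [Fin.val_mk] at hfil  -- hfil : m < m + 1 - r
    omega
  have key : ∃ t ∈ T, finRotate (m + 1) t ∉ T := by
    by_contra hcon
    push_neg at hcon
    have hall : ∀ n : ℕ, τ ⟨0, by omega⟩ + (n : Fin (m + 1)) ∈ T := by
      intro n
      induction n with
      | zero => simpa using h0T
      | succ n ih =>
        have h2 := hcon _ ih
        rw [finRotate_succ_apply] at h2
        have hcast : ((n + 1 : ℕ) : Fin (m + 1)) = (n : Fin (m + 1)) + 1 := by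
          push_cast; ring
        rw [hcast, ← add_assoc]
        exact h2
    apply hlast
    have h3 := hall ((τ ⟨m, by omega⟩ - τ ⟨0, by omega⟩ : Fin (m + 1)) : ℕ)
    have he : τ ⟨0, by omega⟩ + (τ ⟨m, by omega⟩ - τ ⟨0, by omega⟩) = τ ⟨m, by omega⟩ := by
      ring
    rwa [Fin.cast_val_eq_self, he] at h3
  obtain ⟨t, htT, hnt⟩ := key
  obtain ⟨s₁, hs₁mem, hs₁eq⟩ := Finset.mem_image.mp htT
  have hs₁lt : (s₁ : ℕ) < m + 1 - r := (Finset.mem_filter.mp hs₁mem).2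
  refine ⟨s₁, τ.symm (finRotate (m + 1) t), hs₁lt, ?_, ?_⟩
  · by_contra hcon
    push_neg at hcon
    exact hnt (by simpa [Equiv.apply_symm_apply] using hmem (τ.symm (finRotate (m + 1) t)) hcon)
  · rw [hs₁eq]
    exact (τ.apply_symm_apply _).symm

/-! ### The main counting bound -/

lemma sq4_card_le (k r N : ℕ) (hk : 2 ≤ k) (hr1 : 1 ≤ r) (hrk : r ≤ k - 1)
    (σ τ σ' τ' : Equiv.Perm (Fin k)) :
    ((Finset.univ.filter fun z :
        ((Fin k → Fin N) × (Fin k → Fin N)) × ((Fin k → Fin N) × (Fin k → Fin N)) =>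
      headK k r (encK k N σ z.1.1) = headK k r (encK k N σ' z.2.1) ∧
      headK k r (encK k N τ z.1.2) = headK k r (encK k N τ' z.2.2) ∧
      tailK k r (encK k N σ z.1.1) = tailK k r (encK k N τ z.1.2) ∧
      tailK k r (encK k N σ' z.2.1) = tailK k r (encK k N τ' z.2.2)).card)
      ≤ N ^ (2 * k - 1) := by
  classical
  have hr : r ≤ k := by omega
  obtain ⟨s₁, s₂, hs₁, hs₂, hrot⟩ := boundary k r hk hr1 hrk τ
  set c : Fin k := finRotate k (τ' s₁) with hc
  set S := (Finset.univ.filter fun z :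
      ((Fin k → Fin N) × (Fin k → Fin N)) × ((Fin k → Fin N) × (Fin k → Fin N)) =>
    headK k r (encK k N σ z.1.1) = headK k r (encK k N σ' z.2.1) ∧
    headK k r (encK k N τ z.1.2) = headK k r (encK k N τ' z.2.2) ∧
    tailK k r (encK k N σ z.1.1) = tailK k r (encK k N τ z.1.2) ∧
    tailK k r (encK k N σ' z.2.1) = tailK k r (encK k N τ' z.2.2)) with hS
  have pin : ∀ z ∈ S, z.2.2 c = z.1.1 (σ s₂) := by
    intro z hz
    obtain ⟨-, h1, h2, h3, h4⟩ := Finset.mem_filter.mp hz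
    have e3 := tail_apply_eq hr h3 hs₂
    have e2 := head_apply_eq h2 hs₁
    have e3' : z.1.1 (σ s₂) = z.1.2 (τ s₂) := encK_fst e3
    have e2' : z.1.2 (finRotate k (τ s₁)) = z.2.2 (finRotate k (τ' s₁)) := encK_snd e2
    rw [hrot] at e2'
    rw [hc, ← e2', ← e3']
  have recon_j : ∀ z ∈ S, ∀ t : Fin k, z.1.2 t =
      if ((τ.symm t : Fin k) : ℕ) < k - r then z.2.2 (τ' (τ.symm t))
      else z.1.1 (σ (τ.symm t)) := by
    intro z hz t
    obtain ⟨-, h1, h2, h3, h4⟩ := Finset.mem_filter.mp hz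
    have htS : τ (τ.symm t) = t := τ.apply_symm_apply t
    split_ifs with hcase
    · have e := head_apply_eq h2 hcase
      have : z.1.2 (τ (τ.symm t)) = z.2.2 (τ' (τ.symm t)) := encK_fst e
      rwa [htS] at this
    · have e := tail_apply_eq hr h3 (s := τ.symm t) (by omega)
      have : z.1.1 (σ (τ.symm t)) = z.1.2 (τ (τ.symm t)) := encK_fst e
      rw [htS] at this
      exact this.symm
  have recon_i' : ∀ z ∈ S, ∀ t : Fin k, z.2.1 t =
      if ((σ'.symm t : Fin k) : ℕ) < k - r then z.1.1 (σ (σ'.symm t))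
      else z.2.2 (τ' (σ'.symm t)) := by
    intro z hz t
    obtain ⟨-, h1, h2, h3, h4⟩ := Finset.mem_filter.mp hz
    have htS : σ' (σ'.symm t) = t := σ'.apply_symm_apply t
    split_ifs with hcase
    · have e := head_apply_eq h1 hcase
      have : z.1.1 (σ (σ'.symm t)) = z.2.1 (σ' (σ'.symm t)) := encK_fst e
      rw [htS] at this
      exact this.symm
    · have e := tail_apply_eq hr h4 (s := σ'.symm t) (by omega)
      have : z.2.1 (σ' (σ'.symm t)) = z.2.2 (τ' (σ'.symm t)) := encK_fst e
      rwa [htS] at this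
  have hinj : Set.InjOn
      (fun z : ((Fin k → Fin N) × (Fin k → Fin N)) × ((Fin k → Fin N) × (Fin k → Fin N)) =>
        (z.1.1, fun xx : {x : Fin k // x ≠ c} => z.2.2 xx.1)) ↑S := by
    intro z hz z' hz' hgz
    have hz0 := Finset.mem_coe.mp hz
    have hz0' := Finset.mem_coe.mp hz'
    have hgz' : (z.1.1, fun xx : {x : Fin k // x ≠ c} => z.2.2 xx.1) =
        (z'.1.1, fun xx : {x : Fin k // x ≠ c} => z'.2.2 xx.1) := hgz
    have hg1 : z.1.1 = z'.1.1 := (Prod.ext_iff.mp hgz').1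
    have hg2 : (fun xx : {x : Fin k // x ≠ c} => z.2.2 xx.1) =
        fun xx : {x : Fin k // x ≠ c} => z'.2.2 xx.1 := (Prod.ext_iff.mp hgz').2
    have hj' : z.2.2 = z'.2.2 := by
      funext t
      by_cases ht : t = c
      · subst ht
        rw [pin z hz0, pin z' hz0', hg1]
      · exact congrFun hg2 ⟨t, ht⟩
    have hj : z.1.2 = z'.1.2 := by
      funext t
      rw [recon_j z hz0 t, recon_j z' hz0' t, hg1, hj']
    have hi' : z.2.1 = z'.2.1 := by
      funext t
      rw [recon_i' z hz0 t, recon_i' z' hz0' t, hg1, hj']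
    exact Prod.ext (Prod.ext hg1 hj) (Prod.ext hi' hj')
  have hcle := Finset.card_le_card_of_injOn
    (t := (Finset.univ : Finset ((Fin k → Fin N) × ({x : Fin k // x ≠ c} → Fin N))))
    _ (fun z _ => Finset.mem_univ _) hinj
  calc S.card ≤ (Finset.univ : Finset ((Fin k → Fin N) × ({x : Fin k // x ≠ c} → Fin N))).card :=
        hcle
    _ = N ^ k * N ^ (k - 1) := by
        rw [Finset.card_univ, Fintype.card_prod, Fintype.card_fun, Fintype.card_fun]
        congr 2
        · exact Fintype.card_fin N
        · exact Fintype.card_fin k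
        · exact Fintype.card_fin N
        · rw [Fintype.card_subtype_compl, Fintype.card_subtype_eq, Fintype.card_fin]
    _ ≤ N ^ (2 * k - 1) := le_of_eq (by rw [← pow_add]; congr 1; omega)

lemma sqSigma_card_le (k r N : ℕ) (hk : 2 ≤ k) (hr1 : 1 ≤ r) (hrk : r ≤ k - 1)
    (σ τ : Equiv.Perm (Fin k)) :
    ((((DN N k ×ˢ DN N k) ×ˢ (DN N k ×ˢ DN N k)).filter fun z =>
      headK k r (encK k N σ z.1.1) = headK k r (encK k N σ z.2.1) ∧
      headK k r (encK k N τ z.1.2) = headK k r (encK k N τ z.2.2) ∧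
      tailK k r (encK k N σ z.1.1) = tailK k r (encK k N τ z.1.2) ∧
      tailK k r (encK k N σ z.2.1) = tailK k r (encK k N τ z.2.2)).card)
      ≤ N ^ (2 * k - 1) := by
  refine le_trans (Finset.card_le_card ?_) (sq4_card_le k r N hk hr1 hrk σ τ σ τ)
  exact Finset.filter_subset_filter _ (Finset.subset_univ _)

lemma sqF_card_le (k r N : ℕ) (hk : 2 ≤ k) (hr1 : 1 ≤ r) (hrk : r ≤ k - 1) :
    (((((DN N k ×ˢ (Finset.univ : Finset (Equiv.Perm (Fin k)))) ×ˢ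
        (DN N k ×ˢ (Finset.univ : Finset (Equiv.Perm (Fin k))))) ×ˢ
       ((DN N k ×ˢ (Finset.univ : Finset (Equiv.Perm (Fin k)))) ×ˢ
        (DN N k ×ˢ (Finset.univ : Finset (Equiv.Perm (Fin k)))))).filter fun z =>
      headK k r (encK k N z.1.1.2 z.1.1.1) = headK k r (encK k N z.2.1.2 z.2.1.1) ∧
      headK k r (encK k N z.1.2.2 z.1.2.1) = headK k r (encK k N z.2.2.2 z.2.2.1) ∧
      tailK k r (encK k N z.1.1.2 z.1.1.1) = tailK k r (encK k N z.1.2.2 z.1.2.1) ∧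
      tailK k r (encK k N z.2.1.2 z.2.1.1) = tailK k r (encK k N z.2.2.2 z.2.2.1)).card)
      ≤ (Nat.factorial k) ^ 4 * N ^ (2 * k - 1) := by
  classical
  set S := ((((DN N k ×ˢ (Finset.univ : Finset (Equiv.Perm (Fin k)))) ×ˢ
        (DN N k ×ˢ (Finset.univ : Finset (Equiv.Perm (Fin k))))) ×ˢ
       ((DN N k ×ˢ (Finset.univ : Finset (Equiv.Perm (Fin k)))) ×ˢ
        (DN N k ×ˢ (Finset.univ : Finset (Equiv.Perm (Fin k)))))).filter fun z =>
      headK k r (encK k N z.1.1.2 z.1.1.1) = headK k r (encK k N z.2.1.2 z.2.1.1) ∧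
      headK k r (encK k N z.1.2.2 z.1.2.1) = headK k r (encK k N z.2.2.2 z.2.2.1) ∧
      tailK k r (encK k N z.1.1.2 z.1.1.1) = tailK k r (encK k N z.1.2.2 z.1.2.1) ∧
      tailK k r (encK k N z.2.1.2 z.2.1.1) = tailK k r (encK k N z.2.2.2 z.2.2.1)) with hSdef
  rw [Finset.card_eq_sum_card_fiberwise
    (f := fun z => (z.1.1.2, z.1.2.2, z.2.1.2, z.2.2.2))
    (t := (Finset.univ : Finset (Equiv.Perm (Fin k) × Equiv.Perm (Fin k) ×
      Equiv.Perm (Fin k) × Equiv.Perm (Fin k))))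
    (fun z _ => Finset.mem_univ _)]
  have hfiber : ∀ e : Equiv.Perm (Fin k) × Equiv.Perm (Fin k) ×
      Equiv.Perm (Fin k) × Equiv.Perm (Fin k),
      (S.filter fun z => (z.1.1.2, z.1.2.2, z.2.1.2, z.2.2.2) = e).card ≤ N ^ (2 * k - 1) := by
    intro e
    refine le_trans (Finset.card_le_card_of_injOn
      (fun z => ((z.1.1.1, z.1.2.1), (z.2.1.1, z.2.2.1))) ?_ ?_)
      (sq4_card_le k r N hk hr1 hrk e.1 e.2.1 e.2.2.1 e.2.2.2)
    · intro z hz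
      obtain ⟨hzS, hze⟩ := Finset.mem_filter.mp hz
      obtain ⟨-, hpred⟩ := Finset.mem_filter.mp hzS
      obtain ⟨he1, he2, he3, he4⟩ : z.1.1.2 = e.1 ∧ z.1.2.2 = e.2.1 ∧
          z.2.1.2 = e.2.2.1 ∧ z.2.2.2 = e.2.2.2 := by
        have := hze
        simp only [Prod.ext_iff] at this
        exact ⟨this.1, this.2.1, this.2.2.1, this.2.2.2⟩
      refine Finset.mem_filter.mpr ⟨Finset.mem_univ _, ?_⟩
      rw [← he1, ← he2, ← he3, ← he4]
      exact hpred
    · intro z hz z' hz' hgz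
      have hze := (Finset.mem_filter.mp (Finset.mem_coe.mp hz)).2
      have hze' := (Finset.mem_filter.mp (Finset.mem_coe.mp hz')).2
      simp only [Prod.ext_iff] at hgz hze hze'
      refine Prod.ext (Prod.ext ?_ ?_) (Prod.ext ?_ ?_)
      · exact Prod.ext hgz.1.1 (hze.1.trans hze'.1.symm)
      · exact Prod.ext hgz.1.2 (hze.2.1.trans hze'.2.1.symm)
      · exact Prod.ext hgz.2.1 (hze.2.2.1.trans hze'.2.2.1.symm)
      · exact Prod.ext hgz.2.2 (hze.2.2.2.trans hze'.2.2.2.symm)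
  calc (∑ e ∈ (Finset.univ : Finset (Equiv.Perm (Fin k) × Equiv.Perm (Fin k) ×
      Equiv.Perm (Fin k) × Equiv.Perm (Fin k))),
        (S.filter fun z => (z.1.1.2, z.1.2.2, z.2.1.2, z.2.2.2) = e).card)
      ≤ ∑ _e ∈ (Finset.univ : Finset (Equiv.Perm (Fin k) × Equiv.Perm (Fin k) ×
        Equiv.Perm (Fin k) × Equiv.Perm (Fin k))), N ^ (2 * k - 1) :=
        Finset.sum_le_sum fun e _ => hfiber e
    _ = (Nat.factorial k) ^ 4 * N ^ (2 * k - 1) := by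
        rw [Finset.sum_const, Finset.card_univ, smul_eq_mul]
        congr 1
        simp only [Fintype.card_prod, Fintype.card_perm, Fintype.card_fin]
        ring

/-! ### Numeric lemmas -/

lemma c0_pow (k N : ℕ) (hN : 2 ≤ N) :
    (((N : ℝ) ^ (-(k : ℝ) / 2)) * ((N : ℝ) ^ (-(k : ℝ) / 2))) ^ 2 =
      (((N : ℝ)) ^ (2 * k))⁻¹ := by
  have hNpos : (0 : ℝ) < N := by exact_mod_cast (by omega : 0 < N)
  rw [← Real.rpow_add hNpos]
  have h1 : (-(k : ℝ) / 2 + -(k : ℝ) / 2) = -(k : ℝ) := by ring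
  rw [h1, ← Real.rpow_natCast ((N : ℝ) ^ (-(k : ℝ))) 2, ← Real.rpow_mul hNpos.le]
  have h2 : (-(k : ℝ) * ((2 : ℕ) : ℝ)) = -(((2 * k : ℕ) : ℝ)) := by push_cast; ring
  rw [h2, Real.rpow_neg hNpos.le, Real.rpow_natCast]

lemma final_le (N k : ℕ) (hN : 2 ≤ N) (hk : 1 ≤ k) {s : ℝ} (h0 : 0 ≤ s)
    (hs : s ≤ (N : ℝ) ^ (2 * k - 1)) :
    (((N : ℝ)) ^ (2 * k))⁻¹ * s ≤ ((N : ℝ))⁻¹ := by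
  have hNpos : (0 : ℝ) < N := by exact_mod_cast (by omega : 0 < N)
  have h1 : ((N : ℝ)) ^ (2 * k) = (N : ℝ) ^ (2 * k - 1) * N := by
    rw [← pow_succ]; congr 1; omega
  calc (((N : ℝ)) ^ (2 * k))⁻¹ * s ≤ (((N : ℝ)) ^ (2 * k))⁻¹ * (N : ℝ) ^ (2 * k - 1) := by
        apply mul_le_mul_of_nonneg_left hs (by positivity)
    _ = ((N : ℝ))⁻¹ := by
        rw [h1, mul_inv]
        have ha : ((N : ℝ)) ^ (2 * k - 1) ≠ 0 := by positivity
        field_simp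

/-- Step 1 of the proof of Proposition 3.1 (see (3.27)): the contraction norms
of the kernels `f_{k,N}` are `O(N^{-1/2})`; in fact
`‖f_{k,N}^{(σ)} ⋆_r f_{k,N}^{(τ)}‖² ≤ N^{-1}` for all `σ, τ ∈ S_k`. -/
theorem kernel_contraction_bounds (k : ℕ) (hk : 2 ≤ k) :
    (∃ C : ℝ, ∀ r : ℕ, 1 ≤ r → r ≤ k - 1 → ∀ N : ℕ, 2 ≤ N →
      Real.sqrt (contrNormSq k r (kernelF k N) (kernelF k N)) ≤
        C * (N : ℝ) ^ (-(1 : ℝ) / 2)) ∧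
    (∀ N : ℕ, 2 ≤ N → ∀ σ τ : Equiv.Perm (Fin k), ∀ r : ℕ, 1 ≤ r → r ≤ k - 1 →
      contrNormSq k r (kernelSigma k N σ) (kernelSigma k N τ) ≤ ((N : ℝ))⁻¹) := by
  have hfact : ((Nat.factorial k : ℝ)) ≠ 0 := Nat.cast_ne_zero.mpr (Nat.factorial_ne_zero k)
  constructor
  · refine ⟨1, ?_⟩
    intro r hr1 hrk N hN
    have hr : r ≤ k := by omega
    have hNpos : (0 : ℝ) < N := by exact_mod_cast (by omega : 0 < N)
    have hcontr : contrNormSq k r (kernelF k N) (kernelF k N) ≤ ((N : ℝ))⁻¹ := by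
      rw [kernelF_rep, contrNormSq_indSum hr]
      have hcard := sqF_card_le k r N hk hr1 hrk
      set T := (((((DN N k ×ˢ (Finset.univ : Finset (Equiv.Perm (Fin k)))) ×ˢ
          (DN N k ×ˢ (Finset.univ : Finset (Equiv.Perm (Fin k))))) ×ˢ
         ((DN N k ×ˢ (Finset.univ : Finset (Equiv.Perm (Fin k)))) ×ˢ
          (DN N k ×ˢ (Finset.univ : Finset (Equiv.Perm (Fin k)))))).filter fun z =>
        headK k r (encK k N z.1.1.2 z.1.1.1) = headK k r (encK k N z.2.1.2 z.2.1.1) ∧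
        headK k r (encK k N z.1.2.2 z.1.2.1) = headK k r (encK k N z.2.2.2 z.2.2.1) ∧
        tailK k r (encK k N z.1.1.2 z.1.1.1) = tailK k r (encK k N z.1.2.2 z.1.2.1) ∧
        tailK k r (encK k N z.2.1.2 z.2.1.1) = tailK k r (encK k N z.2.2.2 z.2.2.1)).card)
        with hT
      have heq : ((1 / (Nat.factorial k : ℝ) * (N : ℝ) ^ (-(k : ℝ) / 2)) *
            (1 / (Nat.factorial k : ℝ) * (N : ℝ) ^ (-(k : ℝ) / 2))) ^ 2 * (T : ℝ) =
          (((N : ℝ)) ^ (2 * k))⁻¹ *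
            ((1 / (Nat.factorial k : ℝ)) ^ 4 * (T : ℝ)) := by
        rw [show ((1 / (Nat.factorial k : ℝ) * (N : ℝ) ^ (-(k : ℝ) / 2)) *
            (1 / (Nat.factorial k : ℝ) * (N : ℝ) ^ (-(k : ℝ) / 2))) ^ 2 =
            (1 / (Nat.factorial k : ℝ)) ^ 4 *
            (((N : ℝ) ^ (-(k : ℝ) / 2)) * ((N : ℝ) ^ (-(k : ℝ) / 2))) ^ 2 from by ring,
          c0_pow k N hN]
        ring
      rw [heq]
      refine final_le N k hN (by omega) (by positivity) ?_
      have hTle : (T : ℝ) ≤ ((Nat.factorial k : ℝ)) ^ 4 * (N : ℝ) ^ (2 * k - 1) := by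
        calc (T : ℝ) ≤ (((Nat.factorial k) ^ 4 * N ^ (2 * k - 1) : ℕ) : ℝ) := by
              exact_mod_cast hcard
          _ = ((Nat.factorial k : ℝ)) ^ 4 * (N : ℝ) ^ (2 * k - 1) := by push_cast; ring
      calc (1 / (Nat.factorial k : ℝ)) ^ 4 * (T : ℝ)
          ≤ (1 / (Nat.factorial k : ℝ)) ^ 4 *
            (((Nat.factorial k : ℝ)) ^ 4 * (N : ℝ) ^ (2 * k - 1)) := by
            apply mul_le_mul_of_nonneg_left hTle (by positivity)
        _ = (N : ℝ) ^ (2 * k - 1) := by field_simp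
    have h0 : 0 ≤ contrNormSq k r (kernelF k N) (kernelF k N) := by
      rw [kernelF_rep, contrNormSq_indSum hr]
      positivity
    calc Real.sqrt (contrNormSq k r (kernelF k N) (kernelF k N))
        ≤ Real.sqrt (((N : ℝ))⁻¹) := Real.sqrt_le_sqrt hcontr
      _ = 1 * (N : ℝ) ^ (-(1 : ℝ) / 2) := by
          rw [one_mul, show ((N : ℝ))⁻¹ = (N : ℝ) ^ (-(1 : ℝ)) from
            (Real.rpow_neg_one _).symm]
          rw [Real.rpow_neg hNpos.le, Real.sqrt_inv, Real.rpow_one,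
            show (-(1 : ℝ) / 2) = -(1 / 2 : ℝ) from by ring,
            Real.rpow_neg hNpos.le, Real.sqrt_eq_rpow]
  · intro N hN σ τ r hr1 hrk
    have hr : r ≤ k := by omega
    rw [kernelSigma_rep, kernelSigma_rep, contrNormSq_indSum hr, c0_pow k N hN]
    refine final_le N k hN (by omega) (by positivity) ?_
    exact_mod_cast sqSigma_card_le k r N hk hr1 hrk σ τ

end
end
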